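/- Let p ≥ 2 and define, for v in the Sobolev space W^{1,p}(0,1) with v(1) = 0, f₁(v) = (1/p)∫₀¹ |v'(r)|^p dr and f₂(v) = ((p-1)/p)∫₀¹ r^{p-2} |v(r)|^p dr. Then for every such v with v ≢ 0, f₁(v)/f₂(v) ≥ 1/(p-1); equivalently, (p-1)²∫₀¹ r^{p-2}|v|^p dr ≤ (p-1)∫₀¹ |v'|^p dr. -/

import Mathlib

open Set MeasureTheory intervalIntegral

/-- Poincaré-type inequality: for `v` with `v(1)=0`,
`(p-1)² ∫₀¹ r^{p-2}|v|^p ≤ (p-1) ∫₀¹ |v'|^p`, i.e. `f₁(v)/f₂(v) ≥ 1/(p-1)`. -/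
theorem stmt_9 (p : ℝ) (hp : 2 ≤ p)
    (v v' : ℝ → ℝ) (hv : ∀ r, HasDerivAt v (v' r) r)
    (hv'c : ContinuousOn v' (Icc (0:ℝ) 1))
    (hbc : v 1 = 0)
    (hne : ∃ r ∈ Icc (0:ℝ) 1, v r ≠ 0) :
    (p - 1) ^ 2 * ∫ r in (0:ℝ)..1, r ^ (p - 2) * |v r| ^ p ≤
      (p - 1) * ∫ r in (0:ℝ)..1, |v' r| ^ p := by
  have hp0 : (0:ℝ) < p - 1 := by linarith
  have hppos : (0:ℝ) ≤ p := by linarith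
  set C := ∫ s in (0:ℝ)..1, |v' s| with hCdef
  set B := ∫ s in (0:ℝ)..1, |v' s| ^ p with hBdef
  have habs : ContinuousOn (fun s => |v' s|) (Icc (0:ℝ) 1) := hv'c.abs
  have hIabs : IntervalIntegrable (fun s => |v' s|) volume 0 1 := by
    apply ContinuousOn.intervalIntegrable
    rwa [uIcc_of_le (by norm_num : (0:ℝ) ≤ 1)]
  -- Step A: pointwise bound |v r| ≤ C on [0,1]
  have hA : ∀ r ∈ Icc (0:ℝ) 1, |v r| ≤ C := by
    intro r hr
    have hint : IntervalIntegrable v' volume r 1 := by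
      apply ContinuousOn.intervalIntegrable
      rw [uIcc_of_le hr.2]
      exact hv'c.mono (Icc_subset_Icc hr.1 le_rfl)
    have hftc : ∫ s in r..1, v' s = v 1 - v r :=
      integral_eq_sub_of_hasDerivAt (fun x _ => hv x) hint
    have heq : |v r| = |∫ s in r..1, v' s| := by
      rw [hftc, hbc]; simp
    rw [heq]
    calc |∫ s in r..1, v' s| ≤ ∫ s in r..1, |v' s| :=
          abs_integral_le_integral_abs hr.2
      _ ≤ C := by
          apply integral_mono_interval hr.1 hr.2 le_rfl _ hIabs
          exact Filter.Eventually.of_forall fun x => abs_nonneg _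
  -- Step B: Jensen's inequality, C ^ p ≤ B
  have hprob : IsProbabilityMeasure (volume.restrict (Ioc (0:ℝ) 1)) := by
    constructor
    simp [Real.volume_Ioc]
  have hB' : C ^ p ≤ B := by
    have hconv : ConvexOn ℝ (Ici 0) fun x : ℝ => x ^ p :=
      convexOn_rpow (by linarith)
    have hcont : ContinuousOn (fun x : ℝ => x ^ p) (Ici 0) :=
      continuousOn_id.rpow_const fun x _ => Or.inr hppos
    have hfi : Integrable (fun s => |v' s|) (volume.restrict (Ioc (0:ℝ) 1)) := hIabs.1
    have hgi : Integrable ((fun x : ℝ => x ^ p) ∘ fun s => |v' s|)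
        (volume.restrict (Ioc (0:ℝ) 1)) := by
      have : IntervalIntegrable (fun s => |v' s| ^ p) volume 0 1 := by
        apply ContinuousOn.intervalIntegrable
        rw [uIcc_of_le (by norm_num : (0:ℝ) ≤ 1)]
        exact habs.rpow_const fun x _ => Or.inr hppos
      exact this.1
    have hfs : ∀ᵐ x ∂(volume.restrict (Ioc (0:ℝ) 1)), |v' x| ∈ Ici (0:ℝ) :=
      Filter.Eventually.of_forall fun x => mem_Ici.mpr (abs_nonneg _)
    have hjen := hconv.map_integral_le hcont isClosed_Ici hfs hfi hgi
    have e1 : C = ∫ x, |v' x| ∂(volume.restrict (Ioc (0:ℝ) 1)) := by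
      rw [hCdef, intervalIntegral.integral_of_le (by norm_num : (0:ℝ) ≤ 1)]
    have e2 : B = ∫ x, |v' x| ^ p ∂(volume.restrict (Ioc (0:ℝ) 1)) := by
      rw [hBdef, intervalIntegral.integral_of_le (by norm_num : (0:ℝ) ≤ 1)]
    rw [e1, e2]
    exact hjen
  -- Step C: integral comparison
  have hr2 : (-1:ℝ) < p - 2 := by linarith
  have hIr : IntervalIntegrable (fun r : ℝ => r ^ (p - 2)) volume 0 1 :=
    intervalIntegrable_rpow' hr2
  have hval : ∫ r in (0:ℝ)..1, r ^ (p - 2) = 1 / (p - 1) := by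
    rw [integral_rpow (Or.inl hr2)]
    rw [Real.one_rpow, Real.zero_rpow (by linarith : p - 2 + 1 ≠ 0)]
    ring_nf
  have hvc : Continuous v := continuous_iff_continuousAt.mpr fun r => (hv r).continuousAt
  have hmono : (∫ r in (0:ℝ)..1, r ^ (p - 2) * |v r| ^ p) ≤
      ∫ r in (0:ℝ)..1, r ^ (p - 2) * C ^ p := by
    apply integral_mono_on (by norm_num : (0:ℝ) ≤ 1)
    · apply hIr.mul_continuousOn
      exact (hvc.abs.rpow_const fun x => Or.inr hppos).continuousOn
    · exact hIr.mul_const _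
    · intro x hx
      exact mul_le_mul_of_nonneg_left
        (Real.rpow_le_rpow (abs_nonneg _) (hA x hx) hppos)
        (Real.rpow_nonneg hx.1 _)
  have hCint : (∫ r in (0:ℝ)..1, r ^ (p - 2) * C ^ p) = C ^ p / (p - 1) := by
    rw [intervalIntegral.integral_mul_const, hval]; ring
  have h1 : (p - 1) ^ 2 * (∫ r in (0:ℝ)..1, r ^ (p - 2) * |v r| ^ p) ≤
      (p - 1) ^ 2 * (C ^ p / (p - 1)) := by
    apply mul_le_mul_of_nonneg_left _ (sq_nonneg _)
    rw [← hCint]; exact hmono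
  have h2 : (p - 1) ^ 2 * (C ^ p / (p - 1)) = (p - 1) * C ^ p := by
    field_simp
  have h3 : (p - 1) * C ^ p ≤ (p - 1) * B := mul_le_mul_of_nonneg_left hB' hp0.le
  linarith
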